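/- The man-proposing deferred acceptance algorithm yields the M-optimal stable matching: every man weakly prefers his partner under this matching to his partner under any other stable matching. -/

import Mathlib

open scoped Classical

/-- A marriage problem's (strict) preference profile, given by injective rank
functions over potential partners plus the option `none` of staying single
(lower rank = more preferred). -/
structure Pref (M W : Type) where
  mrank : M → Option W → ℕ
  wrank : W → Option M → ℕ
  minj : ∀ a x y, mrank a x = mrank a y → x = y
  winj : ∀ b x y, wrank b x = wrank b y → x = y

/-- A one-to-one matching between `M` and `W` (with `none` = single). -/
structure Matching (M W : Type) where
  mu : M → Option W
  nu : W → Option M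
  consistent : ∀ a b, mu a = some b ↔ nu b = some a

/-- No player strictly prefers being single to the assigned partner. -/
def IndivRational {M W : Type} (P : Pref M W) (μ : Matching M W) : Prop :=
  (∀ a, ¬ P.mrank a none < P.mrank a (μ.mu a)) ∧
  (∀ b, ¬ P.wrank b none < P.wrank b (μ.nu b))

/-- The pair `(a, b)` blocks `μ`. -/
def Blocks {M W : Type} (P : Pref M W) (μ : Matching M W) (a : M) (b : W) : Prop :=
  P.mrank a (some b) < P.mrank a (μ.mu a) ∧ P.wrank b (some a) < P.wrank b (μ.nu b)

/-- Stability: individual rationality together with absence of blocking pairs. -/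
def StableMatching {M W : Type} (P : Pref M W) (μ : Matching M W) : Prop :=
  IndivRational P μ ∧ ∀ a b, ¬ Blocks P μ a b

noncomputable section

variable {M W : Type} [Fintype M] [Fintype W]

/-- `b` is acceptable to man `a`. -/
def mAcc (P : Pref M W) (a : M) (b : W) : Prop := P.mrank a (some b) < P.mrank a none

/-- `a` is acceptable to woman `b`. -/
def wAcc (P : Pref M W) (b : W) (a : M) : Prop := P.wrank b (some a) < P.wrank b none

/-- The state of the man-proposing deferred acceptance algorithm:
for each man, the index of the next woman on his list to propose to,
and for each woman, the proposer she currently (tentatively) holds. -/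
structure DAState (M W : Type) where
  next : M → ℕ
  hold : W → Option M

/-- A man is free if no woman currently holds him. -/
def IsFree (s : DAState M W) (a : M) : Prop := ∀ b, s.hold b ≠ some a

/-- The `k`-th woman (0-indexed) on man `a`'s list of acceptable women,
in decreasing order of preference. -/
def target (P : Pref M W) (a : M) (k : ℕ) : Option W :=
  if h : ∃ b : W, mAcc P a b ∧
      (Finset.univ.filter fun b' => mAcc P a b' ∧
        P.mrank a (some b') < P.mrank a (some b)).card = k
  then some h.choose else none

/-- Woman `b`'s most preferred acceptable man in the finite set `c` (if any). -/
def best (P : Pref M W) (b : W) (c : Finset M) : Option M :=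
  if h : ∃ a ∈ c, wAcc P b a ∧ ∀ a' ∈ c, wAcc P b a' → P.wrank b (some a) ≤ P.wrank b (some a')
  then some h.choose else none

/-- One round of the man-proposing deferred acceptance algorithm: every free
man proposes to the next woman on his list; every woman holds the best
acceptable man among her current proposers and the man she held before. -/
def daStep (P : Pref M W) (s : DAState M W) : DAState M W where
  next a := if IsFree s a ∧ (target P a (s.next a)).isSome then s.next a + 1 else s.next a
  hold b := best P b
    ((Finset.univ.filter fun a => IsFree s a ∧ target P a (s.next a) = some b) ∪
      (s.hold b).toFinset)

/-- The algorithm terminates when no free man has anyone left to propose to. -/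
def Finished (P : Pref M W) (s : DAState M W) : Prop :=
  ∀ a, IsFree s a → target P a (s.next a) = none

/-- Iterate the deferred acceptance rounds (with fuel). -/
def daRun (P : Pref M W) : ℕ → DAState M W → DAState M W
  | 0, s => s
  | n + 1, s => if Finished P s then s else daRun P n (daStep P s)

/-- The initial state: every man is free and about to propose to his favorite. -/
def daInit : DAState M W := ⟨fun _ => 0, fun _ => none⟩

/-- The final state of the man-proposing deferred acceptance algorithm
(the fuel is enough for the algorithm to have terminated). -/
def daFinal (P : Pref M W) : DAState M W :=
  daRun P (Fintype.card M * (Fintype.card W + 1) + 1) daInit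

/-- The partner of woman `b` under the man-proposing DA matching. -/
def daNu (P : Pref M W) (b : W) : Option M := (daFinal P).hold b

/-- The partner of man `a` under the man-proposing DA matching. -/
def daMu (P : Pref M W) (a : M) : Option W :=
  if h : ∃ b, (daFinal P).hold b = some a then some h.choose else none

/-- Man `a` proposes to woman `b` at some point during the run of the
man-proposing deferred acceptance algorithm. -/
def Proposes (P : Pref M W) (a : M) (b : W) : Prop :=
  ∃ n, IsFree (daRun P n daInit) a ∧ target P a ((daRun P n daInit).next a) = some b

end

namespace DAopt

set_option linter.unusedSectionVars false

variable {M W : Type} [Fintype M] [Fintype W]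

/-- Rank index of woman `b` on man `a`'s acceptable list. -/
noncomputable def idx (P : Pref M W) (a : M) (b : W) : ℕ :=
  (Finset.univ.filter fun b' => mAcc P a b' ∧
      P.mrank a (some b') < P.mrank a (some b)).card

lemma idx_lt (P : Pref M W) {a : M} {b b' : W} (hb' : mAcc P a b')
    (h : P.mrank a (some b') < P.mrank a (some b)) : idx P a b' < idx P a b := by
  apply Finset.card_lt_card
  constructor
  · intro x hx
    simp only [Finset.mem_filter, Finset.mem_univ, true_and] at *
    exact ⟨hx.1, hx.2.trans h⟩
  · intro hsub
    have hmem : b' ∈ Finset.univ.filter fun x => mAcc P a x ∧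
        P.mrank a (some x) < P.mrank a (some b) := by
      simp only [Finset.mem_filter, Finset.mem_univ, true_and]
      exact ⟨hb', h⟩
    have := hsub hmem
    simp only [Finset.mem_filter, Finset.mem_univ, true_and] at this
    exact lt_irrefl _ this.2

lemma idx_inj (P : Pref M W) {a : M} {b b' : W} (hb : mAcc P a b) (hb' : mAcc P a b')
    (h : idx P a b = idx P a b') : b = b' := by
  rcases lt_trichotomy (P.mrank a (some b)) (P.mrank a (some b')) with hlt | heq | hgt
  · exact absurd h (by have := idx_lt P hb hlt; omega)
  · exact Option.some_injective _ (P.minj a _ _ heq)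
  · exact absurd h (by have := idx_lt P hb' hgt; omega)

lemma idx_lt_cardW (P : Pref M W) (a : M) (b : W) : idx P a b < Fintype.card W := by
  have hsub : (Finset.univ.filter fun b' => mAcc P a b' ∧
      P.mrank a (some b') < P.mrank a (some b)) ⊆ Finset.univ.erase b := by
    intro x hx
    simp only [Finset.mem_filter, Finset.mem_univ, true_and] at hx
    refine Finset.mem_erase.2 ⟨?_, Finset.mem_univ x⟩
    rintro rfl; exact lt_irrefl _ hx.2
  have h1 := Finset.card_le_card hsub
  have h2 := Finset.card_erase_of_mem (Finset.mem_univ b)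
  have h3 : 0 < Fintype.card W := Fintype.card_pos_iff.2 ⟨b⟩
  rw [h2, Finset.card_univ] at h1
  rw [idx]; omega

lemma idx_surj (P : Pref M W) (a : M) :
    ∀ n b, mAcc P a b → idx P a b = n → ∀ k ≤ n, ∃ b0, mAcc P a b0 ∧ idx P a b0 = k := by
  intro n
  induction n using Nat.strong_induction_on with
  | _ n ih =>
    intro b hb hn k hk
    rcases eq_or_lt_of_le hk with rfl | hklt
    · exact ⟨b, hb, hn⟩
    · -- the "better set" of b is nonempty
      have hpos : 0 < idx P a b := by omega
      have hne : (Finset.univ.filter fun b' => mAcc P a b' ∧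
          P.mrank a (some b') < P.mrank a (some b)).Nonempty :=
        Finset.card_pos.mp hpos
      obtain ⟨b1, hb1mem, hb1max⟩ := Finset.exists_max_image _ (fun x => P.mrank a (some x)) hne
      simp only [Finset.mem_filter, Finset.mem_univ, true_and] at hb1mem
      have hset : (Finset.univ.filter fun b' => mAcc P a b' ∧
          P.mrank a (some b') < P.mrank a (some b1)) =
          (Finset.univ.filter fun b' => mAcc P a b' ∧
          P.mrank a (some b') < P.mrank a (some b)).erase b1 := by
        ext x
        simp only [Finset.mem_filter, Finset.mem_univ, true_and, Finset.mem_erase]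
        constructor
        · rintro ⟨hx, hxlt⟩
          refine ⟨?_, hx, hxlt.trans hb1mem.2⟩
          rintro rfl; exact lt_irrefl _ hxlt
        · rintro ⟨hxne, hx, hxlt⟩
          refine ⟨hx, ?_⟩
          have hle := hb1max x (by
            simp only [Finset.mem_filter, Finset.mem_univ, true_and]; exact ⟨hx, hxlt⟩)
          rcases lt_or_eq_of_le hle with h | h
          · exact h
          · exact absurd (Option.some_injective _ (P.minj a _ _ h)) hxne
      have hidx1 : idx P a b1 = idx P a b - 1 := by
        rw [idx, hset, Finset.card_erase_of_mem]
        · rfl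
        · simp only [Finset.mem_filter, Finset.mem_univ, true_and]; exact hb1mem
      exact ih (idx P a b - 1) (by omega) b1 hb1mem.1 hidx1 k (by omega)

lemma target_eq_some_iff (P : Pref M W) (a : M) (k : ℕ) (b : W) :
    target P a k = some b ↔ mAcc P a b ∧ idx P a b = k := by
  rw [target]
  split_ifs with h
  · obtain ⟨hacc, hcard⟩ := h.choose_spec
    constructor
    · rintro hb
      have : h.choose = b := Option.some_injective _ hb
      subst this; exact ⟨hacc, hcard⟩
    · rintro ⟨hb, hbk⟩
      have : h.choose = b := idx_inj P hacc hb (by rw [idx, hcard, ← hbk, idx])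
      rw [this]
  · simp only [false_iff]
    rintro ⟨hb, hbk⟩
    exact h ⟨b, hb, hbk⟩

lemma target_none (P : Pref M W) {a : M} {k : ℕ} (h : target P a k = none)
    {b : W} (hb : mAcc P a b) : idx P a b < k := by
  by_contra h'
  push_neg at h'
  obtain ⟨b0, hb0, hb0k⟩ := idx_surj P a (idx P a b) b hb rfl k h'
  rw [(target_eq_some_iff P a k b0).2 ⟨hb0, hb0k⟩] at h
  exact Option.some_ne_none _ h

lemma target_some_bound (P : Pref M W) {a : M} {k : ℕ} {b : W}
    (h : target P a k = some b) : k < Fintype.card W := by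
  obtain ⟨_, hk⟩ := (target_eq_some_iff P a k b).1 h
  rw [← hk]; exact idx_lt_cardW P a b

/-! ### `best` lemmas -/

lemma best_spec {P : Pref M W} {b : W} {c : Finset M} {m : M} (h : best P b c = some m) :
    m ∈ c ∧ wAcc P b m ∧ ∀ a' ∈ c, wAcc P b a' → P.wrank b (some m) ≤ P.wrank b (some a') := by
  rw [best] at h
  split_ifs at h with hh
  have : hh.choose = m := Option.some_injective _ h
  rw [← this]; exact hh.choose_spec

lemma best_le {P : Pref M W} {b : W} {c : Finset M} {m : M} (hm : m ∈ c) (hacc : wAcc P b m) :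
    ∃ m1, best P b c = some m1 ∧ P.wrank b (some m1) ≤ P.wrank b (some m) := by
  have hne : (c.filter fun a => wAcc P b a).Nonempty :=
    ⟨m, by simp only [Finset.mem_filter]; exact ⟨hm, hacc⟩⟩
  obtain ⟨a0, ha0mem, ha0min⟩ := Finset.exists_min_image _ (fun x => P.wrank b (some x)) hne
  simp only [Finset.mem_filter] at ha0mem
  have hh : ∃ a ∈ c, wAcc P b a ∧ ∀ a' ∈ c, wAcc P b a' →
      P.wrank b (some a) ≤ P.wrank b (some a') := by
    refine ⟨a0, ha0mem.1, ha0mem.2, fun a' ha' hacc' => ?_⟩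
    exact ha0min a' (by simp only [Finset.mem_filter]; exact ⟨ha', hacc'⟩)
  have hbsome : best P b c = some hh.choose := by rw [best, dif_pos hh]
  obtain ⟨hmem, hhacc, hmin⟩ := hh.choose_spec
  exact ⟨hh.choose, hbsome, hmin m hm hacc⟩


/-- The candidate set of woman `b` in one step. -/
noncomputable def cand (P : Pref M W) (s : DAState M W) (b : W) : Finset M :=
  (Finset.univ.filter fun a => IsFree s a ∧ target P a (s.next a) = some b) ∪
    (s.hold b).toFinset

lemma daStep_hold (P : Pref M W) (s : DAState M W) (b : W) :
    (daStep P s).hold b = best P b (cand P s b) := rfl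

lemma mem_cand {P : Pref M W} {s : DAState M W} {b : W} {m : M} :
    m ∈ cand P s b ↔
      (IsFree s m ∧ target P m (s.next m) = some b) ∨ s.hold b = some m := by
  simp only [cand, Finset.mem_union, Finset.mem_filter, Finset.mem_univ, true_and,
    Option.mem_toFinset, Option.mem_def]

lemma daStep_next (P : Pref M W) (s : DAState M W) (a : M) :
    (daStep P s).next a = if IsFree s a ∧ (target P a (s.next a)).isSome
      then s.next a + 1 else s.next a := rfl

lemma next_mono (P : Pref M W) (s : DAState M W) (a : M) :
    s.next a ≤ (daStep P s).next a := by
  rw [daStep_next]; split_ifs <;> omega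

/-- The master invariant of the DA run. -/
structure Inv (P : Pref M W) (s : DAState M W) : Prop where
  acc : ∀ b m, s.hold b = some m → wAcc P b m
  uniq : ∀ b b' m, s.hold b = some m → s.hold b' = some m → b = b'
  prop : ∀ b m, s.hold b = some m → ∃ k < s.next m, target P m k = some b
  held : ∀ m k b, k < s.next m → target P m k = some b →
    P.wrank b (s.hold b) ≤ P.wrank b (some m)
  bnd : ∀ a, s.next a ≤ Fintype.card W

lemma hold_mono (P : Pref M W) (s : DAState M W)
    (hacc : ∀ b m, s.hold b = some m → wAcc P b m) (b : W) :
    P.wrank b ((daStep P s).hold b) ≤ P.wrank b (s.hold b) := by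
  rcases hs : s.hold b with _ | m0
  · rcases hs' : (daStep P s).hold b with _ | m1
    · exact le_refl _
    · rw [daStep_hold] at hs'
      exact le_of_lt (best_spec hs').2.1
  · have hm0 : m0 ∈ cand P s b := mem_cand.2 (Or.inr hs)
    obtain ⟨m1, hb1, hle⟩ := best_le hm0 (hacc b m0 hs)
    rw [daStep_hold, hb1]
    exact hle

lemma Inv_step (P : Pref M W) (s : DAState M W) (hI : Inv P s) : Inv P (daStep P s) := by
  constructor
  · intro b m h
    rw [daStep_hold] at h
    exact (best_spec h).2.1
  · intro b b' m h h'
    rw [daStep_hold] at h h'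
    have hm := mem_cand.1 (best_spec h).1
    have hm' := mem_cand.1 (best_spec h').1
    rcases hm with ⟨hf, ht⟩ | hh <;> rcases hm' with ⟨hf', ht'⟩ | hh'
    · exact Option.some_injective _ (ht ▸ ht')
    · exact absurd hh' (hf b')
    · exact absurd hh (hf' b)
    · exact hI.uniq b b' m hh hh'
  · intro b m h
    rw [daStep_hold] at h
    rcases mem_cand.1 (best_spec h).1 with ⟨hf, ht⟩ | hh
    · refine ⟨s.next m, ?_, ht⟩
      rw [daStep_next, if_pos ⟨hf, by rw [ht]; rfl⟩]
      omega
    · obtain ⟨k, hk, htk⟩ := hI.prop b m hh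
      exact ⟨k, lt_of_lt_of_le hk (next_mono P s m), htk⟩
  · intro m k b hk ht
    rw [daStep_next] at hk
    split_ifs at hk with hcond
    · rcases Nat.lt_succ_iff_lt_or_eq.1 hk with hk' | rfl
      · exact le_trans (hold_mono P s hI.acc b) (hI.held m k b hk' ht)
      · -- m proposes to b right now
        have hmc : m ∈ cand P s b := mem_cand.2 (Or.inl ⟨hcond.1, ht⟩)
        by_cases hacc : wAcc P b m
        · obtain ⟨m1, hb1, hle⟩ := best_le hmc hacc
          rw [daStep_hold, hb1]
          exact hle
        · have h1 : P.wrank b none ≤ P.wrank b (some m) := not_lt.1 hacc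
          have h2 : P.wrank b ((daStep P s).hold b) ≤ P.wrank b none := by
            rcases hs' : (daStep P s).hold b with _ | m1
            · exact le_refl _
            · rw [daStep_hold] at hs'
              exact le_of_lt (best_spec hs').2.1
          exact le_trans h2 h1
    · exact le_trans (hold_mono P s hI.acc b) (hI.held m k b hk ht)
  · intro a
    rw [daStep_next]
    split_ifs with hcond
    · obtain ⟨b, hb⟩ := Option.isSome_iff_exists.1 hcond.2
      exact target_some_bound P hb
    · exact hI.bnd a

lemma Inv_init : Inv P (daInit : DAState M W) := by
  constructor
  · intro b m h; simp [daInit] at h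
  · intro b b' m h; exact absurd h (by simp [daInit])
  · intro b m h; simp [daInit] at h
  · intro m k b hk; exact absurd hk (Nat.not_lt_zero k)
  · intro a; exact Nat.zero_le _

/-- No woman ever holds a man strictly better than her partner in the stable
matching `ν`. -/
def Good (P : Pref M W) (ν : Matching M W) (s : DAState M W) : Prop :=
  ∀ a b, ν.mu a = some b → P.wrank b (some a) ≤ P.wrank b (s.hold b)

lemma Good_init (P : Pref M W) (ν : Matching M W) (hν : StableMatching P ν) :
    Good P ν (daInit : DAState M W) := by
  intro a b hab
  have hnu : ν.nu b = some a := (ν.consistent a b).1 hab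
  have := hν.1.2 b
  rw [hnu] at this
  exact not_lt.1 this

lemma Good_step (P : Pref M W) (ν : Matching M W) (hν : StableMatching P ν)
    (s : DAState M W) (hI : Inv P s) (hG : Good P ν s) : Good P ν (daStep P s) := by
  intro a b hab
  have hnu : ν.nu b = some a := (ν.consistent a b).1 hab
  rcases hh : (daStep P s).hold b with _ | m'
  · have := hν.1.2 b
    rw [hnu] at this
    exact not_lt.1 this
  · by_contra hlt'
    push_neg at hlt'
    -- hlt' : wrank b m' < wrank b a
    rw [daStep_hold] at hh
    have hspec := best_spec hh
    rcases mem_cand.1 hspec.1 with ⟨hfree, ht⟩ | hold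
    · -- m' proposed to b this round
      obtain ⟨hmacc, hidx⟩ := (target_eq_some_iff P m' (s.next m') b).1 ht
      have hblock : P.mrank m' (some b) < P.mrank m' (ν.mu m') := by
        rcases hmu' : ν.mu m' with _ | b''
        · exact hmacc
        · have hne : b'' ≠ b := by
            rintro rfl
            have := (ν.consistent m' b'').1 hmu'
            rw [hnu] at this
            have : a = m' := Option.some_injective _ this
            subst this
            exact lt_irrefl _ hlt'
          have hb''acc : mAcc P m' b'' := by
            have h1 := hν.1.1 m'
            rw [hmu'] at h1
            have h2 : P.mrank m' (some b'') ≤ P.mrank m' none := not_lt.1 h1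
            rcases lt_or_eq_of_le h2 with h | h
            · exact h
            · exact absurd (P.minj m' _ _ h) (Option.some_ne_none _)
          rcases lt_trichotomy (P.mrank m' (some b)) (P.mrank m' (some b'')) with h | h | h
          · exact h
          · exact absurd (Option.some_injective _ (P.minj m' _ _ h)) (Ne.symm hne)
          · -- m' already proposed to b'' and b'' holds someone ≥ as good as m',
            -- but Good says b'' holds no one better than m' ⇒ b'' holds m', contra free
            exfalso
            have hlt2 : idx P m' b'' < s.next m' := by
              rw [← hidx]; exact idx_lt P hb''acc h
            have h3 := hI.held m' (idx P m' b'') b'' hlt2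
              ((target_eq_some_iff P m' _ b'').2 ⟨hb''acc, rfl⟩)
            have h4 := hG m' b'' hmu'
            have h5 : P.wrank b'' (s.hold b'') = P.wrank b'' (some m') := le_antisymm h3 h4
            have h6 : s.hold b'' = some m' := P.winj b'' _ _ h5
            exact hfree b'' h6
      exact hν.2 m' b ⟨hblock, by rw [hnu]; exact hlt'⟩
    · -- b already held m' before the step
      have := hG a b hab
      rw [hold] at this
      omega

lemma run_good (P : Pref M W) (ν : Matching M W) (hν : StableMatching P ν) :
    ∀ (n : ℕ) (s : DAState M W), Inv P s → Good P ν s →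
      Inv P (daRun P n s) ∧ Good P ν (daRun P n s)
  | 0, s, hI, hG => by rw [daRun]; exact ⟨hI, hG⟩
  | n + 1, s, hI, hG => by
    rw [daRun]
    split_ifs with hf
    · exact ⟨hI, hG⟩
    · exact run_good P ν hν n (daStep P s) (Inv_step P s hI) (Good_step P ν hν s hI hG)

lemma sum_step (P : Pref M W) (s : DAState M W) (h : ¬ Finished P s) :
    (∑ a : M, s.next a) + 1 ≤ ∑ a : M, (daStep P s).next a := by
  rw [Finished] at h
  push_neg at h
  obtain ⟨a0, hfree, ht⟩ := h
  have h1 : s.next a0 < (daStep P s).next a0 := by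
    rw [daStep_next, if_pos ⟨hfree, Option.isSome_iff_ne_none.2 ht⟩]
    omega
  have := Finset.sum_lt_sum (fun (i : M) _ => next_mono P s i)
    ⟨a0, Finset.mem_univ a0, h1⟩
  omega

lemma run_finished (P : Pref M W) :
    ∀ (n : ℕ) (s : DAState M W), Inv P s →
      Fintype.card M * Fintype.card W + 1 ≤ n + ∑ a : M, s.next a →
      Finished P (daRun P n s)
  | 0, s, hI, hb => by
    exfalso
    have hle : ∑ a : M, s.next a ≤ Fintype.card M * Fintype.card W := by
      calc ∑ a : M, s.next a ≤ ∑ _a : M, Fintype.card W :=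
            Finset.sum_le_sum (fun i _ => hI.bnd i)
        _ = Fintype.card M * Fintype.card W := by
            rw [Finset.sum_const, Finset.card_univ, smul_eq_mul]
    omega
  | n + 1, s, hI, hb => by
    rw [daRun]
    split_ifs with hf
    · exact hf
    · exact run_finished P n (daStep P s) (Inv_step P s hI)
        (by have := sum_step P s hf; omega)

lemma mAcc_of_stable {P : Pref M W} {ν : Matching M W} (hν : StableMatching P ν)
    {a : M} {b : W} (h : ν.mu a = some b) : mAcc P a b := by
  have h1 := hν.1.1 a
  rw [h] at h1
  have h2 : P.mrank a (some b) ≤ P.mrank a none := not_lt.1 h1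
  rcases lt_or_eq_of_le h2 with h3 | h3
  · exact h3
  · exact absurd (P.minj a _ _ h3) (Option.some_ne_none _)

end DAopt

/-- The man-proposing deferred acceptance algorithm yields the
M-optimal stable matching: every man weakly prefers his DA partner to his
partner under any other stable matching. -/
theorem da_M_optimal {M W : Type} [Fintype M] [Fintype W] (P : Pref M W)
    (ν : Matching M W) (hν : StableMatching P ν) :
    ∀ a, P.mrank a (daMu P a) ≤ P.mrank a (ν.mu a) := by
  open DAopt in
  have key := run_good P ν hν (Fintype.card M * (Fintype.card W + 1) + 1) daInit
    Inv_init (Good_init P ν hν)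
  have hIF : DAopt.Inv P (daFinal P) := key.1
  have hGF : DAopt.Good P ν (daFinal P) := key.2
  have hFin : Finished P (daFinal P) := by
    rw [daFinal]
    apply DAopt.run_finished P _ _ DAopt.Inv_init
    have h1 : Fintype.card M * (Fintype.card W + 1) =
        Fintype.card M * Fintype.card W + Fintype.card M := Nat.mul_succ _ _
    have h2 : ∑ a : M, (daInit : DAState M W).next a = 0 := by
      simp [daInit]
    omega
  intro a
  by_cases h : ∃ b, (daFinal P).hold b = some a
  · rw [daMu, dif_pos h]
    have hhold : (daFinal P).hold h.choose = some a := h.choose_spec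
    obtain ⟨k, hk, htk⟩ := hIF.prop _ a hhold
    obtain ⟨hmacc, hidxk⟩ := (DAopt.target_eq_some_iff P a k h.choose).1 htk
    rcases hmu : ν.mu a with _ | b
    · exact le_of_lt hmacc
    · rcases lt_trichotomy (P.mrank a (some h.choose)) (P.mrank a (some b))
        with hlt | heq | hgt
      · exact le_of_lt hlt
      · exact le_of_eq heq
      · exfalso
        have hbacc := DAopt.mAcc_of_stable hν hmu
        have hlt2 : DAopt.idx P a b < (daFinal P).next a := by
          have := DAopt.idx_lt P hbacc hgt
          omega
        have h3 := hIF.held a (DAopt.idx P a b) b hlt2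
          ((DAopt.target_eq_some_iff P a _ b).2 ⟨hbacc, rfl⟩)
        have h4 := hGF a b hmu
        have h5 : (daFinal P).hold b = some a := P.winj b _ _ (le_antisymm h3 h4)
        have h6 := hIF.uniq b h.choose a h5 hhold
        rw [h6] at hgt
        exact lt_irrefl _ hgt
  · rw [daMu, dif_neg h]
    push_neg at h
    rcases hmu : ν.mu a with _ | b
    · exact le_refl _
    · exfalso
      have hbacc := DAopt.mAcc_of_stable hν hmu
      have htn := hFin a h
      have hlt := DAopt.target_none P htn hbacc
      have h3 := hIF.held a (DAopt.idx P a b) b hlt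
        ((DAopt.target_eq_some_iff P a _ b).2 ⟨hbacc, rfl⟩)
      have h4 := hGF a b hmu
      exact h b (P.winj b _ _ (le_antisymm h3 h4))
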